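/- Let (S,·) be a (not necessarily commutative) semigroup. Every piecewise syndetic subset A ⊆ S is a J-set: for every finite nonempty set G of sequences f : ℕ → S there exist m ∈ ℕ, a ∈ S^{m+1}, and t(1) < t(2) < ⋯ < t(m) in ℕ such that a(1)·f(t(1))·a(2)·f(t(2))⋯a(m)·f(t(m))·a(m+1) ∈ A for all f ∈ G. -/

import Mathlib

/-- `A` is thick: every finite nonempty set can be right-translated into `A`. -/
def Thick {S : Type*} [Semigroup S] (A : Set S) : Prop :=
  ∀ E : Finset S, E.Nonempty → ∃ x : S, ∀ e ∈ E, e * x ∈ A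

def Syndetic {S : Type*} [Semigroup S] (A : Set S) : Prop :=
  ∃ F : Finset S, F.Nonempty ∧ ∀ s : S, ∃ t ∈ F, t * s ∈ A

def PiecewiseSyndetic {S : Type*} [Semigroup S] (A : Set S) : Prop :=
  ∃ F : Finset S, F.Nonempty ∧ Thick {s : S | ∃ t ∈ F, t * s ∈ A}

def ThickAdd {S : Type*} [AddSemigroup S] (A : Set S) : Prop :=
  ∀ E : Finset S, E.Nonempty → ∃ x : S, ∀ e ∈ E, e + x ∈ A

def SyndeticAdd {S : Type*} [AddSemigroup S] (A : Set S) : Prop :=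
  ∃ F : Finset S, F.Nonempty ∧ ∀ s : S, ∃ t ∈ F, t + s ∈ A

def PiecewiseSyndeticAdd {S : Type*} [AddSemigroup S] (A : Set S) : Prop :=
  ∃ F : Finset S, F.Nonempty ∧ ThickAdd {s : S | ∃ t ∈ F, t + s ∈ A}

/-- Sum of `f t` over a nonempty finite `H ⊆ ℕ` in a commutative semigroup
(junk value `f 0` when `H = ∅`). -/
def fSum {S : Type*} [AddCommSemigroup S] (H : Finset ℕ) (f : ℕ → S) : S :=
  match Finset.sort H (· ≤ ·) with
  | [] => f 0
  | a :: l => l.foldl (fun s t => s + f t) (f a)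

/-- `J`-set in a commutative semigroup. -/
def JSetAdd {S : Type*} [AddCommSemigroup S] (A : Set S) : Prop :=
  ∀ F : Finset (ℕ → S), F.Nonempty →
    ∃ (a : S) (H : Finset ℕ), H.Nonempty ∧ ∀ f ∈ F, a + fSum H f ∈ A

/-- `x(m,a,t,f) = a(0)·f(t 0)·a(1)·f(t 1)⋯f(t (m-1))·a(m)` (0-indexed version of
`(∏_{j=1}^m a(j)·f(t(j)))·a(m+1)`). -/
def xNC {S : Type*} [Semigroup S] (m : ℕ) (a : ℕ → S) (t : ℕ → ℕ) (f : ℕ → S) : S :=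
  (List.range m).foldl (fun s j => s * f (t j) * a (j + 1)) (a 0)

/-- `J`-set in a not-necessarily-commutative semigroup. -/
def JSetNC {S : Type*} [Semigroup S] (A : Set S) : Prop :=
  ∀ G : Finset (ℕ → S), G.Nonempty →
    ∃ (m : ℕ) (a : ℕ → S) (t : ℕ → ℕ), 1 ≤ m ∧
      (∀ i j : ℕ, i < j → j < m → t i < t j) ∧
      ∀ f ∈ G, xNC m a t f ∈ A

/-- `v 0 + v 1 + ⋯ + v r` in an additive semigroup. -/
def seqSum {S : Type*} [AddSemigroup S] (v : ℕ → S) (r : ℕ) : S :=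
  (List.range r).foldl (fun s j => s + v (j + 1)) (v 0)

/-- `v 0 * v 1 * ⋯ * v r` in a semigroup. -/
def seqProd {S : Type*} [Semigroup S] (v : ℕ → S) (r : ℕ) : S :=
  (List.range r).foldl (fun s j => s * v (j + 1)) (v 0)

/-- Collectionwise piecewise syndetic family (multiplicative). -/
def CollectionwisePS {S : Type*} [Semigroup S] (𝒜 : Set (Set S)) : Prop :=
  ∃ (G : Finset (Set S) → Finset S) (x : Finset (Set S) → Finset S → S),
    ∀ (F : Finset S) (ℱ ℋ : Finset (Set S)), ℱ.Nonempty → ↑ℋ ⊆ 𝒜 → ℱ ⊆ ℋ →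
      ∀ y ∈ F, ∃ t ∈ G ℱ, t * (y * x ℋ F) ∈ ⋂₀ (ℱ : Set (Set S))

/-- Collectionwise piecewise syndetic family (additive). -/
def CollectionwisePSAdd {S : Type*} [AddSemigroup S] (𝒜 : Set (Set S)) : Prop :=
  ∃ (G : Finset (Set S) → Finset S) (x : Finset (Set S) → Finset S → S),
    ∀ (F : Finset S) (ℱ ℋ : Finset (Set S)), ℱ.Nonempty → ↑ℋ ⊆ 𝒜 → ℱ ⊆ ℋ →
      ∀ y ∈ F, ∃ t ∈ G ℱ, t + (y + x ℋ F) ∈ ⋂₀ (ℱ : Set (Set S))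

/-- Central set (multiplicative), via the combinatorial characterization. -/
def Central {S : Type*} [Semigroup S] (A : Set S) : Prop :=
  ∃ (I : Type) (C : I → Set S), Nonempty I ∧
    (∀ N, C N ⊆ A) ∧
    (∀ N M : I, ∃ P : I, C P ⊆ C N ∧ C P ⊆ C M) ∧
    (∀ N : I, ∀ y ∈ C N, ∃ M : I, C M ⊆ {s : S | y * s ∈ C N}) ∧
    CollectionwisePS {B : Set S | ∃ N : I, B = C N}

/-- Central set (additive), via the combinatorial characterization. -/
def CentralAdd {S : Type*} [AddSemigroup S] (A : Set S) : Prop :=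
  ∃ (I : Type) (C : I → Set S), Nonempty I ∧
    (∀ N, C N ⊆ A) ∧
    (∀ N M : I, ∃ P : I, C P ⊆ C N ∧ C P ⊆ C M) ∧
    (∀ N : I, ∀ y ∈ C N, ∃ M : I, C M ⊆ {s : S | y + s ∈ C N}) ∧
    CollectionwisePSAdd {B : Set S | ∃ N : I, B = C N}

section AuxPWS

private lemma pws_foldl_coe {S : Type*} [Semigroup S] (v : ℕ → S) (z : S) (l : List ℕ) :
    ((l.foldl (fun s j => s * v j) z : S) : WithOne S) =
      l.foldl (fun s j => s * ((v j : WithOne S))) (z : WithOne S) := by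
  induction l generalizing z with
  | nil => rfl
  | cons a l ih => simp only [List.foldl_cons, ih, WithOne.coe_mul]

private lemma pws_foldl_eq_mul_prod {M : Type*} [Monoid M] (u : ℕ → M) (z : M) (l : List ℕ) :
    l.foldl (fun s j => s * u j) z = z * (l.map u).prod := by
  induction l generalizing z with
  | nil => simp
  | cons a l ih => simp [ih, mul_assoc]

private lemma pws_coe_mul_exists {S : Type*} [Semigroup S] (z : WithOne S) (s : S) :
    ∃ s' : S, z * (s : WithOne S) = (s' : WithOne S) := by
  by_cases hz : z = 1
  · exact ⟨s, by rw [hz, one_mul]⟩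
  · obtain ⟨a, ha⟩ := WithOne.ne_one_iff_exists.mp hz
    exact ⟨a * s, by rw [← ha, WithOne.coe_mul]⟩

end AuxPWS

/-- in an arbitrary semigroup, every piecewise syndetic set is a
`J`-set (noncommutative sense). -/
theorem piecewiseSyndetic_jSetNC {S : Type*} [Semigroup S] (A : Set S)
    (hA : PiecewiseSyndetic A) :
    ∀ G : Finset (ℕ → S), G.Nonempty →
      ∃ (m : ℕ) (a : ℕ → S) (t : ℕ → ℕ), 1 ≤ m ∧
        (∀ i j : ℕ, i < j → j < m → t i < t j) ∧
        ∀ f ∈ G, xNC m a t f ∈ A := by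
  classical
  intro G hG
  obtain ⟨F, hF, hTh⟩ := hA
  obtain ⟨g₀, hg₀⟩ := hG
  set e₀ : S := g₀ 0 with he₀
  obtain ⟨ι, hι, hHJ⟩ :=
    Combinatorics.Line.exists_mono_in_high_dimension {f // f ∈ G} {y // y ∈ F}
  set N := Fintype.card ι with hN
  set e : ι ≃ Fin N := Fintype.equivFin ι with he
  -- words and their products
  set wv : (Fin N → {f // f ∈ G}) → ℕ → S :=
    (fun w j => if h : j < N then (w ⟨j, h⟩ : ℕ → S) j else e₀) with hwv
  set gw : (Fin N → {f // f ∈ G}) → ℕ → S := (fun w j => e₀ * wv w j) with hgw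
  set pS : (Fin N → {f // f ∈ G}) → S :=
    (fun w => (List.range (N - 1)).foldl (fun s j => s * gw w (j + 1)) (gw w 0)) with hpS
  set E : Finset S := Finset.image pS Finset.univ with hE
  have hEne : E.Nonempty :=
    ⟨pS (fun _ => ⟨g₀, hg₀⟩), Finset.mem_image_of_mem _ (Finset.mem_univ _)⟩
  obtain ⟨x, hx⟩ := hTh E hEne
  have hcol : ∀ v : ι → {f // f ∈ G},
      ∃ y, y ∈ F ∧ y * (pS (fun j => v (e.symm j)) * x) ∈ A := by
    intro v
    have hmem : pS (fun j => v (e.symm j)) * x ∈ {s : S | ∃ t ∈ F, t * s ∈ A} :=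
      hx _ (Finset.mem_image_of_mem _ (Finset.mem_univ _))
    obtain ⟨y, hyF, hy⟩ := hmem
    exact ⟨y, hyF, hy⟩
  set C : (ι → {f // f ∈ G}) → {y // y ∈ F} :=
    (fun v => ⟨(hcol v).choose, (hcol v).choose_spec.1⟩) with hC
  obtain ⟨l, c, hc⟩ := hHJ C
  obtain ⟨i₀, hi₀⟩ := l.proper
  have hN1 : 1 ≤ N := by
    rw [hN]
    exact Fintype.card_pos_iff.mpr ⟨i₀⟩
  set J : Finset (Fin N) :=
    Finset.univ.filter (fun j => l.idxFun (e.symm j) = none) with hJ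
  have hJne : J.Nonempty := by
    refine ⟨e i₀, ?_⟩
    simp [hJ, hi₀]
  set m := J.card with hm
  have hm1 : 1 ≤ m := Finset.card_pos.mpr hJne
  set js := J.sort (· ≤ ·) with hjs
  have hlen : js.length = m := Finset.length_sort _
  have hsorted : js.Pairwise (· < ·) := (Finset.sortedLT_sort J).pairwise
  set t : ℕ → ℕ := (fun i => if h : i < m then (js.get ⟨i, hlen ▸ h⟩ : ℕ) else N + i) with ht
  have htmono : ∀ i j : ℕ, i < j → j < m → t i < t j := by
    intro i j hij hj
    have hi : i < m := hij.trans hj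
    rw [ht]
    simp only [dif_pos hi, dif_pos hj]
    have := hsorted.rel_get_of_lt (a := ⟨i, hlen ▸ hi⟩) (b := ⟨j, hlen ▸ hj⟩)
      (by exact Fin.mk_lt_mk.mpr hij)
    exact_mod_cast this
  -- the Fin-valued enumeration of J
  have htJ : ∀ i, i < m → ∃ jf : Fin N, jf ∈ J ∧ (jf : ℕ) = t i := by
    intro i h
    have hil : i < js.length := by rw [hlen]; exact h
    refine ⟨js.get ⟨i, hil⟩, (Finset.mem_sort _).1 (js.get_mem _), ?_⟩
    rw [ht]; simp only [dif_pos h]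
  have htlt : ∀ i, i < m → t i < N := by
    intro i h
    obtain ⟨jf, _, hjf⟩ := htJ i h
    rw [← hjf]; exact jf.isLt
  have hJt : ∀ jf : Fin N, jf ∈ J → ∃ i, ∃ _ : i < m, t i = (jf : ℕ) := by
    intro jf hjf
    have hmem : jf ∈ js := (Finset.mem_sort _).2 hjf
    obtain ⟨k, hk⟩ := List.mem_iff_get.mp hmem
    have hkm : k.1 < m := by rw [← hlen]; exact k.2
    refine ⟨k.1, hkm, ?_⟩
    rw [ht]
    simp only [dif_pos hkm, Fin.eta, hk]
  -- constant-letter machinery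
  set cα : Fin N → {f // f ∈ G} := (fun j => (l.idxFun (e.symm j)).getD ⟨g₀, hg₀⟩) with hcα
  set cf : ℕ → S :=
    (fun j => e₀ * (if h : j < N then (cα ⟨j, h⟩ : ℕ → S) j else e₀)) with hcf
  set uC : ℕ → WithOne S := (fun j => (cf j : WithOne S)) with huC
  set P : ℕ → ℕ → WithOne S := (fun s n => ((List.range' s n).map uC).prod) with hP
  set y₀ : S := (c : S) with hy₀
  set aM : ℕ → WithOne S := (fun i =>
    if i = 0 then (y₀ : WithOne S) * P 0 (t 0) * (e₀ : WithOne S)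
    else if i < m then P (t (i - 1) + 1) (t i - t (i - 1) - 1) * (e₀ : WithOne S)
    else if i = m then P (t (m - 1) + 1) (N - t (m - 1) - 1) * (x : WithOne S)
    else (e₀ : WithOne S)) with haM
  have haMcoe : ∀ i, ∃ s : S, aM i = (s : WithOne S) := by
    intro i
    rw [haM]
    by_cases h0 : i = 0
    · simp only [h0, if_pos rfl]
      exact pws_coe_mul_exists _ _
    · simp only [if_neg h0]
      by_cases h1 : i < m
      · simp only [if_pos h1]; exact pws_coe_mul_exists _ _
      · simp only [if_neg h1]
        by_cases h2 : i = m
        · simp only [if_pos h2]; exact pws_coe_mul_exists _ _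
        · exact ⟨e₀, by simp only [if_neg h2]⟩
  set aS : ℕ → S := (fun i => (haMcoe i).choose) with haS
  have haSspec : ∀ i, aM i = ((aS i : S) : WithOne S) := fun i => (haMcoe i).choose_spec
  refine ⟨m, aS, t, hm1, htmono, ?_⟩
  intro f hf
  set fα : {f // f ∈ G} := ⟨f, hf⟩ with hfα
  set vf : Fin N → {f // f ∈ G} := (fun j => l fα (e.symm j)) with hvf
  set uf : ℕ → WithOne S := (fun j => ((gw vf j : S) : WithOne S)) with huf
  set Pf : ℕ → ℕ → WithOne S := (fun s n => ((List.range' s n).map uf).prod) with hPf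
  -- at a constant position, uf agrees with uC
  have hconst : ∀ j (h : j < N), (⟨j, h⟩ : Fin N) ∉ J → uf j = uC j := by
    intro j h hnot
    have hne : l.idxFun (e.symm ⟨j, h⟩) ≠ none := by
      intro hcon
      exact hnot (by simp [hJ, hcon])
    obtain ⟨aα, haα⟩ := Option.ne_none_iff_exists'.mp hne
    rw [huf, huC, hcf, hgw, hwv]
    simp only [dif_pos h]
    congr 2
    rw [hvf]
    show ((l.idxFun (e.symm ⟨j, h⟩)).getD fα : ℕ → S) j = ((cα ⟨j, h⟩ : ℕ → S)) j
    simp [hcα, haα]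
  -- at a variable position, uf is e₀ * f
  have hvar : ∀ i (h : i < m), uf (t i) = (e₀ : WithOne S) * ((f (t i) : S) : WithOne S) := by
    intro i h
    obtain ⟨jf, hjfJ, hjfv⟩ := htJ i h
    have hfin : (⟨t i, htlt i h⟩ : Fin N) = jf := by
      apply Fin.ext; simp [hjfv]
    have hidx : l.idxFun (e.symm ⟨t i, htlt i h⟩) = none := by
      rw [hfin]
      rw [hJ] at hjfJ
      simpa using hjfJ
    rw [huf, hgw, hwv]
    simp only [dif_pos (htlt i h)]
    rw [hvf]
    show ((e₀ * ((l.idxFun (e.symm ⟨t i, htlt i h⟩)).getD fα : ℕ → S) (t i) : S) : WithOne S) = _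
    rw [hidx]
    simp only [Option.getD_none]
    exact WithOne.coe_mul _ _
  -- gap positions are constant
  have hgap0 : ∀ j (h : j < N), (j < t 0) → (⟨j, h⟩ : Fin N) ∉ J := by
    intro j h hj hmem
    obtain ⟨i, hi, hti⟩ := hJt _ hmem
    have hvj : ((⟨j, h⟩ : Fin N) : ℕ) = j := rfl
    have : t 0 ≤ t i := by
      rcases Nat.eq_zero_or_pos i with h0 | h0
      · rw [h0]
      · exact le_of_lt (htmono 0 i h0 hi)
    omega
  have hgapmid : ∀ i (hi : i + 1 < m) j (h : j < N), t i < j → j < t (i + 1) →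
      (⟨j, h⟩ : Fin N) ∉ J := by
    intro i hi j h hj1 hj2 hmem
    obtain ⟨k, hk, htk⟩ := hJt _ hmem
    have hvj : ((⟨j, h⟩ : Fin N) : ℕ) = j := rfl
    rcases le_or_gt k i with hki | hki
    · have : t k ≤ t i := by
        rcases Nat.eq_or_lt_of_le hki with rfl | hlt
        · rfl
        · exact le_of_lt (htmono k i hlt (lt_trans (Nat.lt_succ_self i) hi))
      omega
    · have : t (i + 1) ≤ t k := by
        rcases Nat.eq_or_lt_of_le hki with rfl | hlt
        · rfl
        · exact le_of_lt (htmono (i + 1) k hlt hk)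
      omega
  have hgaplast : ∀ j (h : j < N), t (m - 1) < j → (⟨j, h⟩ : Fin N) ∉ J := by
    intro j h hj hmem
    obtain ⟨k, hk, htk⟩ := hJt _ hmem
    have hvj : ((⟨j, h⟩ : Fin N) : ℕ) = j := rfl
    have : t k ≤ t (m - 1) := by
      rcases Nat.eq_or_lt_of_le (Nat.le_sub_one_of_lt hk) with heq | hlt
      · rw [heq]
      · exact le_of_lt (htmono k (m - 1) hlt (by omega))
    omega
  -- Pf agrees with P on constant ranges
  have hPeq : ∀ s n, (∀ j, s ≤ j → j < s + n → ∃ h : j < N, (⟨j, h⟩ : Fin N) ∉ J) →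
      Pf s n = P s n := by
    intro s n hc'
    simp only [hPf, hP]
    congr 1
    refine List.map_congr_left ?_
    intro j hj
    rw [List.mem_range'_1] at hj
    obtain ⟨h, hnot⟩ := hc' j hj.1 hj.2
    exact hconst j h hnot
  -- the key inductive computation
  have key : ∀ i, i ≤ m →
      aM 0 * ((List.range i).map (fun j => ((f (t j) : S) : WithOne S) * aM (j + 1))).prod
        = ((y₀ : S) : WithOne S) * Pf 0 (if i = m then N else t i) *
            (if i = m then ((x : S) : WithOne S) else ((e₀ : S) : WithOne S)) := by
    intro i
    induction i with
    | zero =>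
      intro _
      have h0m : (0 : ℕ) ≠ m := by omega
      simp only [List.range_zero, List.map_nil, List.prod_nil, mul_one, if_neg h0m]
      rw [haM]
      simp only [reduceIte]
      have h0 : Pf 0 (t 0) = P 0 (t 0) := by
        refine hPeq 0 (t 0) ?_
        intro j hj0 hjlt
        have hjN : j < N := lt_trans (by omega) (htlt 0 hm1)
        exact ⟨hjN, hgap0 j hjN (by omega)⟩
      rw [h0]
    | succ i ih =>
      intro hi1
      have hi : i < m := hi1
      have hiM : i ≠ m := by omega
      rw [List.range_succ, List.map_append, List.prod_append, ← mul_assoc, ih (le_of_lt hi)]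
      simp only [List.map_cons, List.map_nil, List.prod_cons, List.prod_nil, mul_one,
        if_neg hiM]
      -- now : y₀ * Pf 0 (t i) * e₀ * (f (t i) * aM (i+1)) = RHS
      have step1 : ((y₀ : S) : WithOne S) * Pf 0 (t i) * ((e₀ : S) : WithOne S) *
          (((f (t i) : S) : WithOne S) * aM (i + 1))
          = ((y₀ : S) : WithOne S) * Pf 0 (t i + 1) * aM (i + 1) := by
        have hPfsucc : Pf 0 (t i + 1) = Pf 0 (t i) * uf (t i) := by
          simp only [hPf]
          rw [List.range'_concat]
          simp [List.map_append]
        rw [hPfsucc, hvar i hi]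
        simp only [mul_assoc]
      rw [step1]
      by_cases hlast : i + 1 = m
      · simp only [if_pos hlast]
        rw [haM]
        have h10 : i + 1 ≠ 0 := by omega
        have h1m : ¬ (i + 1 < m) := by omega
        simp only [if_neg h10, if_neg h1m, if_pos hlast]
        have him1 : m - 1 = i := by omega
        rw [him1]
        have harith : (t i + 1) + (N - t i - 1) = N := by
          have := htlt i hi; omega
        have hconst' : Pf (t i + 1) (N - t i - 1) = P (t i + 1) (N - t i - 1) := by
          refine hPeq (t i + 1) (N - t i - 1) ?_
          intro j hj1 hj2
          have hjN : j < N := by omega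
          exact ⟨hjN, hgaplast j hjN (by rw [him1]; omega)⟩
        have hPP : Pf 0 (t i + 1) * P (t i + 1) (N - t i - 1) = Pf 0 N := by
          rw [← hconst']
          simp only [hPf]
          rw [← List.prod_append, ← List.map_append]
          congr 2
          have hra := List.range'_append (s := 0) (m := t i + 1) (n := N - t i - 1) (step := 1)
          simp only [one_mul, zero_add] at hra
          rw [hra]
          congr 1
        rw [← mul_assoc, mul_assoc _ (Pf 0 (t i + 1)) _, hPP]
      · have hlt : i + 1 < m := by omega
        simp only [if_neg hlast]
        rw [haM]
        have h10 : i + 1 ≠ 0 := by omega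
        simp only [if_neg h10, if_pos hlt]
        have hsimp : i + 1 - 1 = i := by omega
        rw [hsimp]
        have hmono' : t i < t (i + 1) := htmono i (i + 1) (Nat.lt_succ_self i) hlt
        have hconst' : Pf (t i + 1) (t (i + 1) - t i - 1) = P (t i + 1) (t (i + 1) - t i - 1) := by
          refine hPeq (t i + 1) (t (i + 1) - t i - 1) ?_
          intro j hj1 hj2
          have hjN : j < N := lt_trans (by omega) (htlt (i + 1) hlt)
          exact ⟨hjN, hgapmid i hlt j hjN (by omega) (by omega)⟩
        have hPP : Pf 0 (t i + 1) * P (t i + 1) (t (i + 1) - t i - 1) = Pf 0 (t (i + 1)) := by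
          rw [← hconst']
          simp only [hPf]
          rw [← List.prod_append, ← List.map_append]
          congr 2
          have hra := List.range'_append (s := 0) (m := t i + 1) (n := t (i + 1) - t i - 1) (step := 1)
          simp only [one_mul, zero_add] at hra
          rw [hra]
          congr 1
          omega
        rw [← mul_assoc, mul_assoc _ (Pf 0 (t i + 1)) _, hPP]
  -- translate pS vf to Pf 0 N
  have hpf : ((pS vf : S) : WithOne S) = Pf 0 N := by
    rw [hpS]
    rw [pws_foldl_coe (fun j => gw vf (j + 1)) (gw vf 0) (List.range (N - 1))]
    rw [pws_foldl_eq_mul_prod]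
    simp only [hPf]
    rw [← List.range_eq_range']
    have : N = (N - 1) + 1 := by omega
    rw [this, List.range_succ_eq_map]
    simp only [List.map_cons, List.prod_cons, List.map_map, Nat.add_sub_cancel, huf,
      Function.comp_def, Nat.succ_eq_add_one]
  -- translate xNC to the key fold
  have hxNC : ((xNC m aS t f : S) : WithOne S)
      = aM 0 * ((List.range m).map (fun j => ((f (t j) : S) : WithOne S) * aM (j + 1))).prod := by
    have hfold : xNC m aS t f
        = (List.range m).foldl (fun s j => s * (f (t j) * aS (j + 1))) (aS 0) := by
      unfold xNC
      congr 1
      funext s j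
      rw [mul_assoc]
    rw [hfold, pws_foldl_coe (fun j => f (t j) * aS (j + 1)) (aS 0) (List.range m)]
    rw [pws_foldl_eq_mul_prod]
    rw [← haSspec 0]
    congr 1
    refine congrArg List.prod (List.map_congr_left ?_)
    intro j _
    rw [WithOne.coe_mul, ← haSspec (j + 1)]
  -- conclude
  have hcf' := hc fα
  have hcval : (hcol (l fα)).choose = y₀ := by
    rw [hy₀, ← hcf']
  have hmemA : y₀ * (pS vf * x) ∈ A := by
    have := (hcol (l fα)).choose_spec.2
    rw [hcval] at this
    exact this
  have hfinal : xNC m aS t f = y₀ * (pS vf * x) := by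
    rw [← WithOne.coe_inj, hxNC, key m le_rfl]
    simp only [eq_self_iff_true, if_true]
    rw [← hpf]
    rw [WithOne.coe_mul, WithOne.coe_mul, mul_assoc]
  rw [hfinal]
  exact hmemA
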